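/- Let p > 3 be a prime, let F be a field of characteristic p, and let a ∈ F with a not a p-th power in F. Then the diagonal quasilinear p-forms ⟨1, a⟩ and ⟨1, a²⟩ are Vishik equivalent but not similar. -/
import Mathlib


/-!
Diagonal quasilinear `p`-forms over a field `F` of characteristic `p`,
following Hoffmann and Zemková. A form of dimension `n` is recorded by its
coefficient tuple `a : ι → F` (for a finite index type `ι`), the form being
`x ↦ ∑ i, a i * (x i)^p`.
-/

universe u

namespace QLF

open scoped BigOperators

/-- Evaluation of the diagonal quasilinear `p`-form with coefficients `a` at `x`. -/
def eval (p : ℕ) {F : Type*} [CommRing F] {ι : Type*} [Fintype ι]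
    (a : ι → F) (x : ι → F) : F :=
  ∑ i, a i * x i ^ p

/-- A form is isotropic if it has a nontrivial zero. -/
def Isotropic (p : ℕ) {F : Type*} [CommRing F] {ι : Type*} [Fintype ι] (a : ι → F) : Prop :=
  ∃ x : ι → F, x ≠ 0 ∧ eval p a x = 0

/-- A form is anisotropic if it has no nontrivial zero. -/
def Anisotropic (p : ℕ) {F : Type*} [CommRing F] {ι : Type*} [Fintype ι] (a : ι → F) : Prop :=
  ¬ Isotropic p a

/-- In characteristic `p`, the zero set of a diagonal quasilinear `p`-form is a
linear subspace. -/
def zeroSubmodule (p : ℕ) [Fact p.Prime] {F : Type*} [Field F] [CharP F p]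
    {ι : Type*} [Fintype ι] (a : ι → F) : Submodule F (ι → F) where
  carrier := {x | eval p a x = 0}
  zero_mem' := by
    have hp : p ≠ 0 := (Fact.out : p.Prime).ne_zero
    simp [eval, zero_pow hp]
  add_mem' := by
    intro x y hx hy
    haveI : ExpChar F p := .prime Fact.out
    have hxy : eval p a (x + y) = eval p a x + eval p a y := by
      simp only [eval, Pi.add_apply]
      rw [← Finset.sum_add_distrib]
      exact Finset.sum_congr rfl fun i _ => by rw [add_pow_char, mul_add]
    simp only [Set.mem_setOf_eq] at *
    rw [hxy, hx, hy, add_zero]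
  smul_mem' := by
    intro c x hx
    simp only [Set.mem_setOf_eq] at *
    have hcx : eval p a (c • x) = c ^ p * eval p a x := by
      simp only [eval, Pi.smul_apply, smul_eq_mul, Finset.mul_sum]
      exact Finset.sum_congr rfl fun i _ => by rw [mul_pow]; ring
    rw [hcx, hx, mul_zero]

/-- The defect `i₀` of a form: the dimension of its zero set. -/
noncomputable def defect (p : ℕ) [Fact p.Prime] {F : Type*} [Field F] [CharP F p]
    {ι : Type*} [Fintype ι] (a : ι → F) : ℕ :=
  Module.finrank F (zeroSubmodule p a)

/-- Isometry of forms: a linear bijection carrying one form into the other. -/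
def Isometric (p : ℕ) {F : Type*} [Field F] {ι κ : Type*} [Fintype ι] [Fintype κ]
    (a : ι → F) (b : κ → F) : Prop :=
  ∃ T : (ι → F) ≃ₗ[F] (κ → F), ∀ x, eval p a x = eval p b (T x)

/-- `a` is a subform of `b`. -/
def Subform (p : ℕ) {F : Type*} [Field F] {ι κ : Type*} [Fintype ι] [Fintype κ]
    (a : ι → F) (b : κ → F) : Prop :=
  ∃ T : (ι → F) →ₗ[F] (κ → F), Function.Injective T ∧ ∀ x, eval p a x = eval p b (T x)

/-- Similarity of forms: `a ≃ c·b` for some scalar `c ≠ 0`. -/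
def Similar (p : ℕ) {F : Type*} [Field F] {ι κ : Type*} [Fintype ι] [Fintype κ]
    (a : ι → F) (b : κ → F) : Prop :=
  ∃ c : F, c ≠ 0 ∧ Isometric p a (fun i => c * b i)

/-- Vishik equivalence: same dimension, and equal defects over every field
extension `E/F`. -/
def VishikEquiv (p : ℕ) [Fact p.Prime] {F : Type u} [Field F] [CharP F p]
    {ι κ : Type*} [Fintype ι] [Fintype κ] (a : ι → F) (b : κ → F) : Prop :=
  Fintype.card ι = Fintype.card κ ∧
    ∀ (E : Type u) [Field E] [CharP E p] (f : F →+* E),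
      defect p (f ∘ a) = defect p (f ∘ b)

/-- Weak Vishik equivalence: same dimension, and equal defects over every field
extension of the shape `E = F(α)` with `αᵖ ∈ F` (this includes `E = F`). -/
def WeakVishikEquiv (p : ℕ) [Fact p.Prime] {F : Type u} [Field F] [CharP F p]
    {ι κ : Type*} [Fintype ι] [Fintype κ] (a : ι → F) (b : κ → F) : Prop :=
  Fintype.card ι = Fintype.card κ ∧
    ∀ (E : Type u) [Field E] [CharP E p] (f : F →+* E) (α : E),
      α ^ p ∈ Set.range ⇑f →
      Subfield.closure (insert α (Set.range ⇑f)) = ⊤ →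
      defect p (f ∘ a) = defect p (f ∘ b)

/-- The set `Fᵖ` of `p`-th powers. -/
def pSet (p : ℕ) (F : Type*) [Field F] : Set F := Set.range fun x : F => x ^ p

/-- The subfield `Fᵖ` of `p`-th powers (in characteristic `p` the set of `p`-th
powers is already a subfield, so the closure adds nothing). -/
def pthSubfield (p : ℕ) (F : Type*) [Field F] : Subfield F :=
  Subfield.closure (pSet p F)

/-- The subfield `Fᵖ(s)` generated by a set `s` over `Fᵖ`. -/
def adjoin (p : ℕ) {F : Type*} [Field F] (s : Set F) : Subfield F :=
  Subfield.closure (pSet p F ∪ s)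

/-- The degree `[N : k]` of a subfield `N` over a subfield `k` (for `k ≤ N`,
the `k`-span of `N` in `F` is `N` itself, so this is the `k`-dimension of `N`). -/
noncomputable def degOver {F : Type*} [Field F] (k : Subfield F) (N : Subfield F) : ℕ :=
  Module.finrank k (Submodule.span k (N : Set F))

/-- The set `D_F(φ)` of values of the form. -/
def values (p : ℕ) {F : Type*} [CommRing F] {ι : Type*} [Fintype ι] (a : ι → F) : Set F :=
  Set.range (eval p a)

/-- The norm field `N_F(φ)`: the subfield generated over `Fᵖ` by all quotients
of nonzero values of `φ`. -/
def normField (p : ℕ) {F : Type*} [Field F] {ι : Type*} [Fintype ι] (a : ι → F) : Subfield F :=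
  adjoin p {z : F | ∃ u ∈ values p a, ∃ v ∈ values p a, u ≠ 0 ∧ v ≠ 0 ∧ z = u / v}

/-- The norm degree `ndeg_F(φ) = [N_F(φ) : Fᵖ]`. -/
noncomputable def ndeg (p : ℕ) {F : Type*} [Field F] {ι : Type*} [Fintype ι] (a : ι → F) : ℕ :=
  degOver (pthSubfield p F) (normField p a)

/-- An anisotropic form is minimal if `ndeg_F(φ) = p^(dim φ - 1)`. -/
def Minimal (p : ℕ) {F : Type*} [Field F] {ι : Type*} [Fintype ι] (a : ι → F) : Prop :=
  Anisotropic p a ∧ ndeg p a = p ^ (Fintype.card ι - 1)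

/-- The quasi-Pfister form `⟪b₁,…,bₙ⟫`: its coefficients are all products
`b₁^{e₁}⋯bₙ^{eₙ}` with `0 ≤ eᵢ ≤ p-1`. -/
def pfister (p : ℕ) {F : Type*} [CommRing F] {n : ℕ} (b : Fin n → F) :
    (Fin n → Fin p) → F :=
  fun e => ∏ i, b i ^ (e i : ℕ)

/-- A form is a quasi-Pfister form if it is isometric to some `⟪b₁,…,bₙ⟫`
with all `bᵢ ∈ F×`. -/
def IsQuasiPfister (p : ℕ) {F : Type*} [Field F] {ι : Type*} [Fintype ι] (a : ι → F) : Prop :=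
  ∃ (n : ℕ) (b : Fin n → F), (∀ i, b i ≠ 0) ∧ Isometric p a (pfister p b)

/-- `a` is a quasi-Pfister neighbor of the form `π`: `c·a ⊆ π` for some `c ≠ 0`
and `p · dim a > dim π`. -/
def IsNeighborOf (p : ℕ) {F : Type*} [Field F] {ι κ : Type*} [Fintype ι] [Fintype κ]
    (a : ι → F) (π : κ → F) : Prop :=
  ∃ c : F, c ≠ 0 ∧ Subform p (fun i => c * a i) π ∧ p * Fintype.card ι > Fintype.card κ

/-- `a` is a quasi-Pfister neighbor (of some quasi-Pfister form). -/
def IsQPNeighbor (p : ℕ) {F : Type*} [Field F] {ι : Type*} [Fintype ι] (a : ι → F) : Prop :=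
  ∃ (n : ℕ) (b : Fin n → F), (∀ i, b i ≠ 0) ∧ IsNeighborOf p a (pfister p b)

/-- `a` is a quasi-Pfister neighbor of codimension one of some anisotropic
quasi-Pfister form: `dim π - dim a = 1`. -/
def IsQPNeighborCodimOne (p : ℕ) {F : Type*} [Field F] {ι : Type*} [Fintype ι]
    (a : ι → F) : Prop :=
  ∃ (n : ℕ) (b : Fin n → F), (∀ i, b i ≠ 0) ∧ Anisotropic p (pfister p b) ∧
    IsNeighborOf p a (pfister p b) ∧ Fintype.card ι + 1 = p ^ n

/-- Tensor product of diagonal forms: coefficients `aᵢ · bⱼ`. -/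
def tensor (p : ℕ) {F : Type*} [CommRing F] {ι κ : Type*}
    (a : ι → F) (b : κ → F) : ι × κ → F :=
  fun ik => a ik.1 * b ik.2

/-- The set `G_F(φ) = {x ∈ F× : xφ ≃ φ} ∪ {0}` of similarity factors. -/
def simFactors (p : ℕ) {F : Type*} [Field F] {ι : Type*} [Fintype ι] (a : ι → F) : Set F :=
  {x | x ≠ 0 ∧ Isometric p (fun i => x * a i) a} ∪ {0}

/-- `b` is the anisotropic part of `a`: `b` is anisotropic and
`a ≃ b ⊥ (m × ⟨0⟩)` for some `m`. -/
def IsAnisotropicPart (p : ℕ) {F : Type*} [Field F] {ι κ : Type*} [Fintype ι] [Fintype κ]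
    (a : ι → F) (b : κ → F) : Prop :=
  Anisotropic p b ∧ ∃ m : ℕ, Isometric p a (Sum.elim b fun _ : Fin m => (0 : F))

/-- `⟪c₁,…,cₘ⟫` is (a representative of) the norm form of `a`:
`N_F(a) = Fᵖ(c₁,…,cₘ)` and `ndeg_F(a) = pᵐ`. -/
def IsNormForm (p : ℕ) {F : Type*} [Field F] {ι : Type*} [Fintype ι] (a : ι → F)
    {m : ℕ} (c : Fin m → F) : Prop :=
  normField p a = adjoin p (Set.range c) ∧ ndeg p a = p ^ m

end QLF

section Helpers

open QLF Polynomial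

variable (p : ℕ) [Fact p.Prime]

lemma QLF.mem_zeroSubmodule {F : Type*} [Field F] [CharP F p]
    {ι : Type*} [Fintype ι] (a : ι → F) (x : ι → F) :
    x ∈ zeroSubmodule p a ↔ eval p a x = 0 := Iff.rfl

lemma QLF.eval_two {E : Type*} [CommRing E] (b : E) (x : Fin 2 → E) :
    eval p ![1, b] x = x 0 ^ p + b * x 1 ^ p := by
  simp [eval, Fin.sum_univ_two]

lemma QLF.key_indep {F : Type*} [Field F] [CharP F p] (hp3 : 3 < p)
    (a : F) (ha : ∀ c : F, c ^ p ≠ a)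
    (s t u v : F) (h : s^p + t^p * a + u^p * a^2 + v^p * a^3 = 0) :
    s = 0 ∧ t = 0 ∧ u = 0 ∧ v = 0 := by
  by_contra hcon
  haveI : ExpChar F p := .prime Fact.out
  have hp : p ≠ 0 := (Fact.out : p.Prime).ne_zero
  set K : Subfield F := (frobenius F p).fieldRange with hK
  have hmem : ∀ x : F, x ^ p ∈ K := fun x => ⟨x, rfl⟩
  set b : K := ⟨a ^ p, hmem a⟩ with hb
  have hbnp : ∀ c : K, c ^ p ≠ b := by
    rintro ⟨c, d, rfl⟩ hc
    have : (d ^ p) ^ p = a ^ p := congrArg Subtype.val hc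
    exact ha d (frobenius_inj F p this)
  have hirr : Irreducible (X ^ p - C b) :=
    X_pow_sub_C_irreducible_of_prime Fact.out hbnp
  have hmon : (X ^ p - C b : K[X]).Monic := monic_X_pow_sub_C b hp
  have haev : aeval a (X ^ p - C b : K[X]) = 0 := by
    simp only [map_sub, map_pow, aeval_X, aeval_C]
    exact sub_eq_zero_of_eq rfl
  have hminp : minpoly K a = X ^ p - C b :=
    (minpoly.eq_of_irreducible_of_monic hirr haev hmon).symm
  have hdeg : (minpoly K a).degree = p := by
    rw [hminp]
    exact degree_X_pow_sub_C (Fact.out : p.Prime).pos b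
  set g : K[X] := C ⟨v^p, hmem v⟩ * X^3 + C ⟨u^p, hmem u⟩ * X^2 +
      C ⟨t^p, hmem t⟩ * X + C ⟨s^p, hmem s⟩ with hg
  have haevg : aeval a g = 0 := by
    have h2 : ((v^p : F) * a^3 + (u^p) * a^2 + (t^p) * a + s^p : F) = 0 := by
      linear_combination h
    simp only [hg, map_add, map_mul, map_pow, aeval_X, aeval_C]
    show (v^p : F) * a^3 + (u^p : F) * a^2 + (t^p : F) * a + (s^p : F) = 0
    exact h2
  have hgne : g ≠ 0 := by
    intro h0
    apply hcon
    have c0 : g.coeff 0 = ⟨s^p, hmem s⟩ := by simp [hg, coeff_C]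
    have c1 : g.coeff 1 = ⟨t^p, hmem t⟩ := by simp [hg, coeff_C, coeff_X]
    have c2 : g.coeff 2 = ⟨u^p, hmem u⟩ := by
      simp [hg, coeff_C, coeff_X, coeff_X_pow]
    have c3 : g.coeff 3 = ⟨v^p, hmem v⟩ := by
      simp [hg, coeff_C, coeff_X, coeff_X_pow]
    rw [h0] at c0 c1 c2 c3
    refine ⟨?_, ?_, ?_, ?_⟩
    · have := congrArg Subtype.val c0.symm
      exact pow_eq_zero_iff hp |>.1 (by simpa using this)
    · have := congrArg Subtype.val c1.symm
      exact pow_eq_zero_iff hp |>.1 (by simpa using this)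
    · have := congrArg Subtype.val c2.symm
      exact pow_eq_zero_iff hp |>.1 (by simpa using this)
    · have := congrArg Subtype.val c3.symm
      exact pow_eq_zero_iff hp |>.1 (by simpa using this)
  have hgdeg : g.degree ≤ 3 := by
    rw [hg]; exact degree_cubic_le
  have hle := minpoly.degree_le_of_ne_zero K a hgne haevg
  rw [hdeg] at hle
  have h3 : (p : WithBot ℕ) ≤ 3 := le_trans hle hgdeg
  have : p ≤ 3 := by exact_mod_cast h3
  omega

lemma QLF.zero_iff (hodd : Odd p) {E : Type*} [Field E] [CharP E p]
    (c : E) (x : Fin 2 → E) :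
    eval p ![1, c^p] x = 0 ↔ x 0 = -(c * x 1) := by
  haveI : ExpChar E p := .prime Fact.out
  rw [eval_two]
  constructor
  · intro h
    have : x 0 ^ p = (-(c * x 1)) ^ p := by
      rw [hodd.neg_pow, mul_pow]; linear_combination h
    exact frobenius_inj E p this
  · intro h
    rw [h, hodd.neg_pow, mul_pow]; ring

lemma QLF.defect_pow (hodd : Odd p) {E : Type*} [Field E] [CharP E p] (c : E) :
    defect p ![1, c^p] = 1 := by
  have hsub : zeroSubmodule p ![1, c^p] = Submodule.span E {![-c, 1]} := by
    ext x
    rw [mem_zeroSubmodule, zero_iff p hodd, Submodule.mem_span_singleton]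
    constructor
    · intro h
      refine ⟨x 1, ?_⟩
      funext i
      fin_cases i
      · show x 1 * (-c) = x 0
        rw [h]; ring
      · show x 1 * 1 = x 1
        ring
    · rintro ⟨r, rfl⟩
      show r * (-c) = -(c * (r * 1))
      ring
  rw [defect, hsub]
  exact finrank_span_singleton (by
    intro h0
    have : (1 : E) = 0 := by
      have := congrFun h0 1
      simpa using this
    exact one_ne_zero this)

lemma QLF.defect_npow (hodd : Odd p) {E : Type*} [Field E] [CharP E p]
    (b : E) (hb : ∀ c : E, c ^ p ≠ b) :
    defect p ![1, b] = 0 := by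
  have hp : p ≠ 0 := (Fact.out : p.Prime).ne_zero
  have hsub : zeroSubmodule p ![1, b] = ⊥ := by
    rw [Submodule.eq_bot_iff]
    intro x hx
    rw [mem_zeroSubmodule, eval_two] at hx
    by_cases h1 : x 1 = 0
    · have h0 : x 0 = 0 := by
        have : x 0 ^ p = 0 := by rw [h1] at hx; simpa [zero_pow hp] using hx
        exact pow_eq_zero_iff hp |>.1 this
      funext i; fin_cases i
      · exact h0
      · exact h1
    · exfalso
      apply hb (-(x 0) / x 1)
      rw [div_pow, hodd.neg_pow, div_eq_iff (pow_ne_zero p h1)]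
      linear_combination -hx
  rw [defect, hsub]
  simp

lemma QLF.sq_mem_iff (hodd : Odd p) {E : Type*} [Field E] [CharP E p] (b : E) :
    (∃ c : E, c ^ p = b) ↔ (∃ c : E, c ^ p = b ^ 2) := by
  have hp : p ≠ 0 := (Fact.out : p.Prime).ne_zero
  constructor
  · rintro ⟨c, rfl⟩
    exact ⟨c ^ 2, by rw [← pow_mul, ← pow_mul, mul_comm]⟩
  · rintro ⟨c, hc⟩
    by_cases hb0 : b = 0
    · exact ⟨0, by rw [hb0, zero_pow hp]⟩
    · set m := (p + 1) / 2 with hm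
      have h2m : 2 * m = p + 1 := by
        obtain ⟨k, hk⟩ := hodd
        omega
      refine ⟨c ^ m / b, ?_⟩
      rw [div_pow, div_eq_iff (pow_ne_zero p hb0)]
      calc (c ^ m) ^ p = (c ^ p) ^ m := by
            rw [← pow_mul, ← pow_mul, mul_comm]
        _ = (b ^ 2) ^ m := by rw [hc]
        _ = b ^ (2 * m) := by rw [← pow_mul]
        _ = b ^ (p + 1) := by rw [h2m]
        _ = b * b ^ p := by ring

end Helpers

/-- For `p > 3` prime, `F` of characteristic `p`, and `a ∈ F` a
non-`p`-th power, the forms `⟨1, a⟩` and `⟨1, a²⟩` are Vishik equivalent but not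
similar. -/
theorem stmt_19 (p : ℕ) [Fact p.Prime] (hp3 : 3 < p)
    {F : Type u} [Field F] [CharP F p]
    (a : F) (ha : a ∉ Set.range fun x : F => x ^ p) :
    QLF.VishikEquiv p ![1, a] ![1, a ^ 2] ∧ ¬ QLF.Similar p ![1, a] ![1, a ^ 2] := by
  constructor
  · constructor
    · rfl
    · intro E _ _ f
      have hodd : Odd p := (Fact.out : p.Prime).odd_of_ne_two (by omega)
      have h1 : f ∘ ![1, a] = ![1, f a] := by
        funext i; fin_cases i <;> simp
      have h2 : f ∘ ![1, a ^ 2] = ![1, (f a) ^ 2] := by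
        funext i; fin_cases i <;> simp
      rw [h1, h2]
      by_cases hc : ∃ c : E, c ^ p = f a
      · obtain ⟨c, hc⟩ := hc
        obtain ⟨d, hd⟩ := (QLF.sq_mem_iff p hodd (f a)).1 ⟨c, hc⟩
        rw [← hd, ← hc, QLF.defect_pow p hodd, QLF.defect_pow p hodd]
      · push_neg at hc
        have hc2 : ∀ c : E, c ^ p ≠ (f a) ^ 2 := by
          intro c h
          exact absurd ((QLF.sq_mem_iff p hodd (f a)).2 ⟨c, h⟩) (by push_neg; exact hc)
        rw [QLF.defect_npow p hodd _ hc, QLF.defect_npow p hodd _ hc2]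
  · rintro ⟨c, hc, T, hT⟩
    have hodd : Odd p := (Fact.out : p.Prime).odd_of_ne_two (by omega)
    have ha' : ∀ x : F, x ^ p ≠ a := by
      intro x hx; exact ha ⟨x, hx⟩
    have h1 := hT ![1, 0]
    have h2 := hT ![0, 1]
    rw [QLF.eval_two] at h1 h2
    have he1 : QLF.eval p (fun i => c * ![1, a ^ 2] i) (T ![1, 0]) =
        c * (T ![1, 0] 0) ^ p + c * a ^ 2 * (T ![1, 0] 1) ^ p := by
      simp [QLF.eval, Fin.sum_univ_two]
    have he2 : QLF.eval p (fun i => c * ![1, a ^ 2] i) (T ![0, 1]) =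
        c * (T ![0, 1] 0) ^ p + c * a ^ 2 * (T ![0, 1] 1) ^ p := by
      simp [QLF.eval, Fin.sum_univ_two]
    rw [he1] at h1
    rw [he2] at h2
    set α := T ![1, 0] 0
    set γ := T ![1, 0] 1
    set β := T ![0, 1] 0
    set δ := T ![0, 1] 1
    have hp : p ≠ 0 := (Fact.out : p.Prime).ne_zero
    simp only [Matrix.cons_val_zero, Matrix.cons_val_one, Matrix.head_cons,
      one_pow, zero_pow hp, mul_zero, mul_one, add_zero, zero_add, mul_comm] at h1 h2
    -- h1 : 1 = c * α^p + c * a^2 * γ^p ; h2 : a = c * β^p + c * a^2 * δ^p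
    have hrel : β ^ p + (-α) ^ p * a + δ ^ p * a ^ 2 + (-γ) ^ p * a ^ 3 = 0 := by
      have hc' : c * (β ^ p + (-α) ^ p * a + δ ^ p * a ^ 2 + (-γ) ^ p * a ^ 3) = 0 := by
        rw [hodd.neg_pow α, hodd.neg_pow γ]
        linear_combination a * h1 - h2
      exact (mul_eq_zero.1 hc').resolve_left hc
    obtain ⟨hβ, hα, hδ, hγ⟩ := QLF.key_indep p hp3 a ha' _ _ _ _ hrel
    rw [neg_eq_zero] at hα hγ
    rw [hα, hγ] at h1
    simp [zero_pow hp] at h1
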